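/- Let α', β' ∈ ℂ and let f : ℤ → ℂ be a sequence with f_n ≠ 0 for all n ∈ ℤ satisfying the third order nonlinear mapping f_{n-1} (f_n)^2 (f_{n+1})^2 f_{n+2} = α' f_n f_{n+1} + β' for all n ∈ ℤ. Then the quantity J̃_n = f_{n-1} f_n + f_n f_{n+1} + α' (1/(f_{n-1} f_n) + 1/(f_n f_{n+1})) + β'/(f_{n-1} (f_n)^2 f_{n+1}) is a conserved quantity, i.e. J̃_n is independent of n. -/

import Mathlib

/-- For a nonvanishing solution `f` of the third order map
`f_{n-1} f_n^2 f_{n+1}^2 f_{n+2} = α' f_n f_{n+1} + β'`, the quantity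
`J̃_n = f_{n-1} f_n + f_n f_{n+1} + α'(1/(f_{n-1} f_n) + 1/(f_n f_{n+1}))
  + β'/(f_{n-1} f_n^2 f_{n+1})` is conserved. -/
theorem third_order_map_conserved_J (α' β' : ℂ) (f : ℤ → ℂ)
    (hne : ∀ n : ℤ, f n ≠ 0)
    (hf : ∀ n : ℤ, f (n - 1) * (f n) ^ 2 * (f (n + 1)) ^ 2 * f (n + 2)
      = α' * (f n * f (n + 1)) + β')
    (J : ℤ → ℂ)
    (hJ : ∀ n : ℤ, J n = f (n - 1) * f n + f n * f (n + 1)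
      + α' * (1 / (f (n - 1) * f n) + 1 / (f n * f (n + 1)))
      + β' / (f (n - 1) * (f n) ^ 2 * f (n + 1))) :
    ∀ m n : ℤ, J m = J n := by
  have step : ∀ n : ℤ, J (n + 1) = J n := by
    intro n
    have h0 := hf n
    have h1 := hJ n
    have h2 := hJ (n + 1)
    have e1 : (n : ℤ) + 1 - 1 = n := by ring
    have e2 : (n : ℤ) + 1 + 1 = n + 2 := by ring
    rw [e1, e2] at h2
    rw [h1, h2]
    have ha := hne (n - 1)
    have hb := hne n
    have hc := hne (n + 1)
    have hd := hne (n + 2)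
    have hB : β' = f (n - 1) * (f n) ^ 2 * (f (n + 1)) ^ 2 * f (n + 2)
        - α' * (f n * f (n + 1)) := by linear_combination -h0
    have k1 : β' / (f (n - 1) * (f n) ^ 2 * f (n + 1))
        = f (n + 1) * f (n + 2) - α' / (f (n - 1) * f n) := by
      rw [hB]
      field_simp
    have k2 : β' / (f n * (f (n + 1)) ^ 2 * f (n + 2))
        = f (n - 1) * f n - α' / (f (n + 1) * f (n + 2)) := by
      rw [hB]
      field_simp
    rw [k1, k2]
    ring

  have key : ∀ n : ℤ, J n = J 0 := by
    intro n
    induction n using Int.induction_on with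
    | zero => rfl
    | succ k ih => rw [step k, ih]
    | pred k ih =>
      have h := step (-k - 1)
      simp only [sub_add_cancel] at h
      rw [← h, ih]
  intro m n
  rw [key m, key n]
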